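/- Mean-zero property of the canonical gradient of Lemma 1 at the data-generating distribution: assume π∘V is a version of μ[Δ | σ(V)] with π∘V > 0 μ-a.e.; Q(A,W) is a version of μ[Y | σ(A,W)]; (π·m_H)∘V is a version of μ[Δ·H_g(A,W)·(Y − Q(A,W)) | σ(V)] and m_H∘V is a version of μ[H_g(A,W)·(Y − Q(A,W)) | σ(V)] (these coincide under coarsening at random); and for a ∈ {0,1}, (π·m^{(a)})∘V is a version of μ[Δ·Q(a,W) | σ(V)]. Set ψ := ∫ (m^{(1)} − m^{(0)})(V) dμ. Then, provided all displayed integrands are integrable, ∫ D* dμ = 0, where D* := (Δ/π(V))·H_g(A,W)·(Y − Q(A,W)) − ((Δ − π(V))/π(V))·m_H(V) + (Δ/π(V))·[Q(1,W) − Q(0,W) − (m^{(1)} − m^{(0)})(V)] + (m^{(1)} − m^{(0)})(V) − ψ. -/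

import Mathlib

open MeasureTheory

/-- The ATE clever covariate `H_g(a,w) = a/g(w) − (1−a)/(1−g(w))`. -/
noncomputable def Hg {𝒲 : Type*} (g : 𝒲 → ℝ) (a : ℝ) (w : 𝒲) : ℝ :=
  a / g w - (1 - a) / (1 - g w)

/-- Mean-zero property of the canonical gradient of Lemma 1 at the data-generating
distribution: with `ψ = ∫ (m⁽¹⁾ − m⁽⁰⁾)(V) dμ`, the canonical gradient
`D* = (Δ/π(V))·H_g(A,W)(Y − Q(A,W)) − ((Δ − π(V))/π(V))·m_H(V)
    + (Δ/π(V))·[Q(1,W) − Q(0,W) − (m⁽¹⁾ − m⁽⁰⁾)(V)] + (m⁽¹⁾ − m⁽⁰⁾)(V) − ψ`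
satisfies `∫ D* dμ = 0`. -/
theorem canonical_gradient_mean_zero {Ω 𝒱 𝒲 : Type*}
    {mΩ : MeasurableSpace Ω} [MeasurableSpace 𝒱] [MeasurableSpace 𝒲]
    (μ : Measure Ω) [IsProbabilityMeasure μ]
    (V : Ω → 𝒱) (hV : Measurable V)
    (W : Ω → 𝒲) (hW : Measurable W)
    (Δ : Ω → ℝ) (hΔ : Measurable Δ) (hΔ01 : ∀ ω, Δ ω = 0 ∨ Δ ω = 1)
    (A : Ω → ℝ) (hA : Measurable A) (hA01 : ∀ ω, A ω = 0 ∨ A ω = 1)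
    (Y : Ω → ℝ) (hY : Integrable Y μ)
    (π mH m1 m0 : 𝒱 → ℝ)
    (hπ : Measurable π) (hmH : Measurable mH) (hm1 : Measurable m1) (hm0 : Measurable m0)
    (g : 𝒲 → ℝ) (hg : Measurable g) (hgbd : ∀ w, 0 < g w ∧ g w < 1)
    (Q : ℝ → 𝒲 → ℝ) (hQ : Measurable (Function.uncurry Q))
    (hπver : (fun ω => π (V ω)) =ᵐ[μ] μ[Δ | MeasurableSpace.comap V inferInstance])
    (hπpos : ∀ᵐ ω ∂μ, 0 < π (V ω))
    (hQver : (fun ω => Q (A ω) (W ω))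
      =ᵐ[μ] μ[Y | MeasurableSpace.comap (fun ω => (A ω, W ω)) inferInstance])
    (hmHver : (fun ω => π (V ω) * mH (V ω))
      =ᵐ[μ] μ[fun ω => Δ ω * (Hg g (A ω) (W ω) * (Y ω - Q (A ω) (W ω)))
        | MeasurableSpace.comap V inferInstance])
    (hmHver' : (fun ω => mH (V ω))
      =ᵐ[μ] μ[fun ω => Hg g (A ω) (W ω) * (Y ω - Q (A ω) (W ω))
        | MeasurableSpace.comap V inferInstance])
    (hm1ver : (fun ω => π (V ω) * m1 (V ω))
      =ᵐ[μ] μ[fun ω => Δ ω * Q 1 (W ω) | MeasurableSpace.comap V inferInstance])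
    (hm0ver : (fun ω => π (V ω) * m0 (V ω))
      =ᵐ[μ] μ[fun ω => Δ ω * Q 0 (W ω) | MeasurableSpace.comap V inferInstance])
    (hint1 : Integrable
      (fun ω => (Δ ω / π (V ω)) * (Hg g (A ω) (W ω) * (Y ω - Q (A ω) (W ω)))) μ)
    (hint2 : Integrable (fun ω => ((Δ ω - π (V ω)) / π (V ω)) * mH (V ω)) μ)
    (hint3 : Integrable
      (fun ω => (Δ ω / π (V ω)) * (Q 1 (W ω) - Q 0 (W ω) - (m1 (V ω) - m0 (V ω)))) μ)
    (hint4 : Integrable (fun ω => m1 (V ω) - m0 (V ω)) μ)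
    (hint5 : Integrable (fun ω => Hg g (A ω) (W ω) * (Y ω - Q (A ω) (W ω))) μ)
    (hint6 : Integrable (fun ω => mH (V ω)) μ)
    (ψ : ℝ) (hψ : ψ = ∫ ω, (m1 (V ω) - m0 (V ω)) ∂μ) :
    ∫ ω, ((Δ ω / π (V ω)) * (Hg g (A ω) (W ω) * (Y ω - Q (A ω) (W ω)))
        - ((Δ ω - π (V ω)) / π (V ω)) * mH (V ω)
        + (Δ ω / π (V ω)) * (Q 1 (W ω) - Q 0 (W ω) - (m1 (V ω) - m0 (V ω)))
        + (m1 (V ω) - m0 (V ω)) - ψ) ∂μ = 0 := by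
  classical
  set m : MeasurableSpace Ω := MeasurableSpace.comap V inferInstance with hm_def
  set mAW : MeasurableSpace Ω :=
    MeasurableSpace.comap (fun ω => (A ω, W ω)) inferInstance with hmAW_def
  have hm : m ≤ mΩ := hV.comap_le
  have hmAW : mAW ≤ mΩ := (hA.prodMk hW).comap_le
  have hVm : Measurable[m] V := fun s hs => ⟨s, hs, rfl⟩
  have hAWm : Measurable[mAW] (fun ω => (A ω, W ω)) := fun s hs => ⟨s, hs, rfl⟩
  -- basic bounds
  have hΔabs : ∀ ω, |Δ ω| ≤ 1 := fun ω => by rcases hΔ01 ω with h | h <;> simp [h]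
  have hbd : ∀ d x : ℝ, |d| ≤ 1 → ‖d * x‖ ≤ ‖x‖ := by
    intro d x hd
    rw [norm_mul, Real.norm_eq_abs]
    exact mul_le_of_le_one_left (norm_nonneg x) hd
  have hΔint : Integrable Δ μ :=
    (integrable_const (1 : ℝ)).mono' hΔ.aestronglyMeasurable
      (Filter.Eventually.of_forall fun ω => by simpa using hΔabs ω)
  have hπle1 : ∀ᵐ ω ∂μ, π (V ω) ≤ 1 := by
    have h1 : ∀ᵐ ω ∂μ, (μ[Δ|m]) ω ≤ (μ[(fun _ => (1 : ℝ))|m]) ω :=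
      condExp_mono hΔint (integrable_const 1)
        (Filter.Eventually.of_forall fun ω => by rcases hΔ01 ω with h | h <;> simp [h])
    filter_upwards [hπver, h1] with ω h2 h3
    rw [h2]
    simpa [condExp_const hm] using h3
  -- strongly measurable pieces
  have hπinvm : StronglyMeasurable[m] (fun ω => (π (V ω))⁻¹) :=
    ((hπ.comp hVm).inv).stronglyMeasurable
  have hfracm : StronglyMeasurable[m] (fun ω => mH (V ω) / π (V ω)) :=
    ((hmH.comp hVm).div (hπ.comp hVm)).stronglyMeasurable
  have hm10m : StronglyMeasurable[m] (fun ω => m1 (V ω) - m0 (V ω)) :=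
    ((hm1.comp hVm).sub (hm0.comp hVm)).stronglyMeasurable
  -- Step 0 : ∫ mH(V) = 0
  have hQint : Integrable (fun ω => Q (A ω) (W ω)) μ := integrable_condExp.congr hQver.symm
  have hYQ : Integrable (fun ω => Y ω - Q (A ω) (W ω)) μ := hY.sub hQint
  have hHmeas : Measurable (fun p : ℝ × 𝒲 => Hg g p.1 p.2) := by
    unfold Hg
    exact (measurable_fst.div (hg.comp measurable_snd)).sub
      ((measurable_const.sub measurable_fst).div
        (measurable_const.sub (hg.comp measurable_snd)))
  have hHm : StronglyMeasurable[mAW] (fun ω => Hg g (A ω) (W ω)) :=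
    (hHmeas.comp hAWm).stronglyMeasurable
  have hQsm : StronglyMeasurable[mAW] (fun ω => Q (A ω) (W ω)) :=
    (hQ.comp hAWm).stronglyMeasurable
  have hcondYQ : μ[(fun ω => Y ω - Q (A ω) (W ω))|mAW] =ᵐ[μ] 0 := by
    have hsub : μ[(fun ω => Y ω - Q (A ω) (W ω))|mAW]
        =ᵐ[μ] μ[Y|mAW] - μ[(fun ω => Q (A ω) (W ω))|mAW] :=
      condExp_sub hY hQint mAW
    have hQfix : μ[(fun ω => Q (A ω) (W ω))|mAW] = fun ω => Q (A ω) (W ω) :=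
      condExp_of_stronglyMeasurable hmAW hQsm hQint
    filter_upwards [hsub, hQver] with ω h1 h2
    simp only [Pi.sub_apply, hQfix, Pi.zero_apply] at h1 ⊢
    rw [h1, ← h2]
    ring
  have hintHYQ0 : ∫ ω, Hg g (A ω) (W ω) * (Y ω - Q (A ω) (W ω)) ∂μ = 0 := by
    have hpull :
        μ[(fun ω => Hg g (A ω) (W ω)) * (fun ω => Y ω - Q (A ω) (W ω))|mAW]
          =ᵐ[μ] (fun ω => Hg g (A ω) (W ω)) * μ[(fun ω => Y ω - Q (A ω) (W ω))|mAW] :=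
      condExp_mul_of_stronglyMeasurable_left hHm (by exact hint5) hYQ
    have hz : μ[(fun ω => Hg g (A ω) (W ω)) * (fun ω => Y ω - Q (A ω) (W ω))|mAW]
        =ᵐ[μ] 0 := by
      refine hpull.trans ?_
      filter_upwards [hcondYQ] with ω h
      simp [h]
    calc ∫ ω, Hg g (A ω) (W ω) * (Y ω - Q (A ω) (W ω)) ∂μ
        = ∫ ω, (μ[(fun ω => Hg g (A ω) (W ω)) * (fun ω => Y ω - Q (A ω) (W ω))|mAW]) ω ∂μ :=
          (integral_condExp hmAW).symm
      _ = 0 := by rw [integral_congr_ae hz]; simp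
  have hSmH : ∫ ω, mH (V ω) ∂μ = 0 := by
    rw [integral_congr_ae hmHver', integral_condExp hm]
    exact hintHYQ0
  -- Term 1
  have hG1 : Integrable (fun ω => Δ ω * (Hg g (A ω) (W ω) * (Y ω - Q (A ω) (W ω)))) μ := by
    exact hint5.norm.mono' (hΔ.aestronglyMeasurable.mul hint5.1)
      (Filter.Eventually.of_forall fun ω => hbd _ _ (hΔabs ω))
  have hI1 : ∫ ω, (Δ ω / π (V ω)) * (Hg g (A ω) (W ω) * (Y ω - Q (A ω) (W ω))) ∂μ = 0 := by
    have hFG : Integrable ((fun ω => (π (V ω))⁻¹) *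
        (fun ω => Δ ω * (Hg g (A ω) (W ω) * (Y ω - Q (A ω) (W ω))))) μ := by
      refine hint1.congr (Filter.Eventually.of_forall fun ω => ?_)
      show _ = _
      simp only [Pi.mul_apply]
      ring
    have hpull := condExp_mul_of_stronglyMeasurable_left hπinvm hFG hG1
    have hchain : (fun ω => (π (V ω))⁻¹) *
        μ[(fun ω => Δ ω * (Hg g (A ω) (W ω) * (Y ω - Q (A ω) (W ω))))|m]
        =ᵐ[μ] fun ω => mH (V ω) := by
      filter_upwards [hmHver, hπpos] with ω h1 h2
      simp only [Pi.mul_apply]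
      rw [← h1]
      field_simp
    have heq : (fun ω => (Δ ω / π (V ω)) * (Hg g (A ω) (W ω) * (Y ω - Q (A ω) (W ω))))
        = (fun ω => (π (V ω))⁻¹) *
          (fun ω => Δ ω * (Hg g (A ω) (W ω) * (Y ω - Q (A ω) (W ω)))) := by
      funext ω; simp only [Pi.mul_apply]; ring
    rw [heq, ← integral_condExp hm (f := (fun ω => (π (V ω))⁻¹) *
        (fun ω => Δ ω * (Hg g (A ω) (W ω) * (Y ω - Q (A ω) (W ω))))),
      integral_congr_ae (hpull.trans hchain)]
    exact hSmH
  -- Term 2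
  have hfracInt : Integrable ((fun ω => mH (V ω) / π (V ω)) * Δ) μ := by
    refine (hint2.add hint6).congr ?_
    filter_upwards [hπpos] with ω hω
    simp only [Pi.add_apply, Pi.mul_apply]
    field_simp
    ring
  have hI2 : ∫ ω, ((Δ ω - π (V ω)) / π (V ω)) * mH (V ω) ∂μ = 0 := by
    have hpull := condExp_mul_of_stronglyMeasurable_left hfracm hfracInt hΔint
    have hchain : (fun ω => mH (V ω) / π (V ω)) * μ[Δ|m] =ᵐ[μ] fun ω => mH (V ω) := by
      filter_upwards [hπver, hπpos] with ω h1 h2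
      simp only [Pi.mul_apply]
      rw [← h1]
      field_simp
    have heq : (fun ω => ((Δ ω - π (V ω)) / π (V ω)) * mH (V ω))
        =ᵐ[μ] fun ω => ((fun ω => mH (V ω) / π (V ω)) * Δ) ω - mH (V ω) := by
      filter_upwards [hπpos] with ω hω
      simp only [Pi.mul_apply]
      field_simp
    rw [integral_congr_ae heq, integral_sub hfracInt hint6,
      ← integral_condExp hm (f := (fun ω => mH (V ω) / π (V ω)) * Δ),
      integral_congr_ae (hpull.trans hchain), hSmH, sub_zero]
  -- Term 3
  have hQ1meas : Measurable[mΩ] (fun ω => Q 1 (W ω)) :=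
    hQ.comp (measurable_const.prodMk hW)
  have hQ0meas : Measurable[mΩ] (fun ω => Q 0 (W ω)) :=
    hQ.comp (measurable_const.prodMk hW)
  have hG3 : Integrable
      (fun ω => Δ ω * (Q 1 (W ω) - Q 0 (W ω) - (m1 (V ω) - m0 (V ω)))) μ := by
    have hmeas : Measurable[mΩ] (fun ω => Δ ω * (Q 1 (W ω) - Q 0 (W ω) - (m1 (V ω) - m0 (V ω)))) :=
      hΔ.mul ((hQ1meas.sub hQ0meas).sub ((hm1.comp hV).sub (hm0.comp hV)))
    refine hint3.norm.mono' hmeas.aestronglyMeasurable ?_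
    filter_upwards [hπpos, hπle1] with ω h1 h2
    have : Δ ω * (Q 1 (W ω) - Q 0 (W ω) - (m1 (V ω) - m0 (V ω)))
        = π (V ω) * ((Δ ω / π (V ω)) * (Q 1 (W ω) - Q 0 (W ω) - (m1 (V ω) - m0 (V ω)))) := by
      field_simp
    rw [this]
    rw [norm_mul]
    calc ‖π (V ω)‖ * ‖_‖ ≤ 1 * ‖_‖ := by
          apply mul_le_mul_of_nonneg_right _ (norm_nonneg _)
          rw [Real.norm_eq_abs, abs_of_pos h1]; exact h2
      _ = _ := one_mul _
  have hΔm10 : Integrable (fun ω => Δ ω * (m1 (V ω) - m0 (V ω))) μ := by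
    exact hint4.norm.mono' (hΔ.aestronglyMeasurable.mul hint4.1)
      (Filter.Eventually.of_forall fun ω => hbd _ _ (hΔabs ω))
  have hΔd : Integrable (fun ω => Δ ω * (Q 1 (W ω) - Q 0 (W ω))) μ := by
    refine (hG3.add hΔm10).congr (Filter.Eventually.of_forall fun ω => ?_)
    simp only [Pi.add_apply]
    ring
  have hΔQA : Integrable (fun ω => Δ ω * Q (A ω) (W ω)) μ := by
    exact hQint.norm.mono' (hΔ.aestronglyMeasurable.mul hQint.1)
      (Filter.Eventually.of_forall fun ω => hbd _ _ (hΔabs ω))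
  have h1A : Integrable (fun ω => (1 - A ω) * (Δ ω * (Q 1 (W ω) - Q 0 (W ω)))) μ := by
    refine hΔd.norm.mono'
      (((measurable_const.sub hA : Measurable[mΩ] (fun ω => 1 - A ω))).aestronglyMeasurable.mul hΔd.1)
      (Filter.Eventually.of_forall fun ω => hbd _ _ ?_)
    rcases hA01 ω with h | h <;> simp [h]
  have hΔQ1 : Integrable (fun ω => Δ ω * Q 1 (W ω)) μ := by
    refine (hΔQA.add h1A).congr (Filter.Eventually.of_forall fun ω => ?_)
    simp only [Pi.add_apply]
    rcases hA01 ω with h | h <;> rw [h] <;> ring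
  have hΔQ0 : Integrable (fun ω => Δ ω * Q 0 (W ω)) μ := by
    refine (hΔQ1.sub hΔd).congr (Filter.Eventually.of_forall fun ω => ?_)
    simp only [Pi.sub_apply]
    ring
  have hcondg3 : μ[(fun ω => Δ ω * (Q 1 (W ω) - Q 0 (W ω) - (m1 (V ω) - m0 (V ω))))|m]
      =ᵐ[μ] 0 := by
    have e : (fun ω => Δ ω * (Q 1 (W ω) - Q 0 (W ω) - (m1 (V ω) - m0 (V ω))))
        = ((fun ω => Δ ω * Q 1 (W ω)) - (fun ω => Δ ω * Q 0 (W ω)))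
          - ((fun ω => m1 (V ω) - m0 (V ω)) * Δ) := by
      funext ω; simp only [Pi.sub_apply, Pi.mul_apply]; ring
    rw [e]
    have hΔm10' : Integrable ((fun ω => m1 (V ω) - m0 (V ω)) * Δ) μ :=
      hΔm10.congr (Filter.Eventually.of_forall fun ω => by
        simp only [Pi.mul_apply]; ring)
    have hΔQ10 : Integrable ((fun ω => Δ ω * Q 1 (W ω)) - (fun ω => Δ ω * Q 0 (W ω))) μ :=
      hΔQ1.sub hΔQ0
    have h1 := condExp_sub (m := m) (μ := μ) hΔQ10 hΔm10'
    have h2 := condExp_sub (m := m) (μ := μ) hΔQ1 hΔQ0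
    have h3 := condExp_mul_of_stronglyMeasurable_left hm10m hΔm10' hΔint
    refine h1.trans ?_
    filter_upwards [h2, h3, hm1ver, hm0ver, hπver] with ω e2 e3 e4 e5 e6
    simp only [Pi.sub_apply, Pi.mul_apply, Pi.zero_apply] at e2 e3 ⊢
    rw [e2, e3, ← e4, ← e5, ← e6]
    ring
  have hI3 : ∫ ω, (Δ ω / π (V ω)) * (Q 1 (W ω) - Q 0 (W ω) - (m1 (V ω) - m0 (V ω))) ∂μ
      = 0 := by
    have hFG : Integrable ((fun ω => (π (V ω))⁻¹) *
        (fun ω => Δ ω * (Q 1 (W ω) - Q 0 (W ω) - (m1 (V ω) - m0 (V ω))))) μ := by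
      refine hint3.congr (Filter.Eventually.of_forall fun ω => ?_)
      show _ = _
      simp only [Pi.mul_apply]
      ring
    have hpull := condExp_mul_of_stronglyMeasurable_left hπinvm hFG hG3
    have hz : (fun ω => (π (V ω))⁻¹) *
        μ[(fun ω => Δ ω * (Q 1 (W ω) - Q 0 (W ω) - (m1 (V ω) - m0 (V ω))))|m]
        =ᵐ[μ] 0 := by
      filter_upwards [hcondg3] with ω h
      simp only [Pi.mul_apply, Pi.zero_apply] at h ⊢
      rw [h, mul_zero]
    have heq : (fun ω => (Δ ω / π (V ω)) * (Q 1 (W ω) - Q 0 (W ω) - (m1 (V ω) - m0 (V ω))))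
        = (fun ω => (π (V ω))⁻¹) *
          (fun ω => Δ ω * (Q 1 (W ω) - Q 0 (W ω) - (m1 (V ω) - m0 (V ω)))) := by
      funext ω; simp only [Pi.mul_apply]; ring
    rw [heq, ← integral_condExp hm (f := (fun ω => (π (V ω))⁻¹) *
        (fun ω => Δ ω * (Q 1 (W ω) - Q 0 (W ω) - (m1 (V ω) - m0 (V ω))))),
      integral_congr_ae (hpull.trans hz)]
    simp
  -- assemble
  have e1 : Integrable (fun ω => (Δ ω / π (V ω)) * (Hg g (A ω) (W ω) * (Y ω - Q (A ω) (W ω)))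
      - ((Δ ω - π (V ω)) / π (V ω)) * mH (V ω)) μ := hint1.sub hint2
  have e2 : Integrable (fun ω => (Δ ω / π (V ω)) * (Hg g (A ω) (W ω) * (Y ω - Q (A ω) (W ω)))
      - ((Δ ω - π (V ω)) / π (V ω)) * mH (V ω)
      + (Δ ω / π (V ω)) * (Q 1 (W ω) - Q 0 (W ω) - (m1 (V ω) - m0 (V ω)))) μ := e1.add hint3
  have e3 : Integrable (fun ω => (Δ ω / π (V ω)) * (Hg g (A ω) (W ω) * (Y ω - Q (A ω) (W ω)))
      - ((Δ ω - π (V ω)) / π (V ω)) * mH (V ω)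
      + (Δ ω / π (V ω)) * (Q 1 (W ω) - Q 0 (W ω) - (m1 (V ω) - m0 (V ω)))
      + (m1 (V ω) - m0 (V ω))) μ := e2.add hint4
  rw [integral_sub e3 (integrable_const ψ), integral_add e2 hint4,
    integral_add e1 hint3, integral_sub hint1 hint2, hI1, hI2, hI3, integral_const]
  simp [hψ]
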